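/- Let (S,K,I) be a split graph and let u,v be distinct vertices of I with deg_S(u) ≥ deg_S(v). If σ_{uv}(S) = p for a prime number p, then |N_S(u) \ N_S(v)| = p, |N_S(v) \ N_S(u)| = 1, and deg_S(u) − deg_S(v) = p − 1. -/

import Mathlib

open SimpleGraph

/-- `T` is a 4-element vertex subset of `S` whose induced subgraph is a path on 4 vertices. -/
def IsInducedP4 {V : Type*} (S : SimpleGraph V) (T : Finset V) : Prop :=
  T.card = 4 ∧ Nonempty (S.induce (T : Set V) ≃g pathGraph 4)

/-- `σ_{uv}(S)`: the number of induced `P4`'s of `S` containing both `u` and `v`. -/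
noncomputable def sigmaP4 {V : Type*} (S : SimpleGraph V) (u v : V) : ℕ :=
  Nat.card {T : Finset V // IsInducedP4 S T ∧ u ∈ T ∧ v ∈ T}

lemma isInducedP4_mk' {V : Type*} [DecidableEq V] (S : SimpleGraph V) {u a b v : V}
    (hua : S.Adj u a) (hab : S.Adj a b) (hbv : S.Adj b v)
    (hub : ¬ S.Adj u b) (huv : ¬ S.Adj u v) (hav : ¬ S.Adj a v)
    (neub : u ≠ b) (neuv : u ≠ v) (neav : a ≠ v) :
    IsInducedP4 S {u, a, b, v} := by
  have neua : u ≠ a := hua.ne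
  have neab : a ≠ b := hab.ne
  have nebv : b ≠ v := hbv.ne
  have hcard : ({u, a, b, v} : Finset V).card = 4 := by
    rw [Finset.card_insert_of_notMem (by simp [neua, neub, neuv]),
        Finset.card_insert_of_notMem (by simp [neab, neav]),
        Finset.card_insert_of_notMem (by simp [nebv]), Finset.card_singleton]
  refine ⟨hcard, ?_⟩
  set T : Finset V := {u, a, b, v} with hT
  have hmem : ∀ i : Fin 4, (![u, a, b, v] i) ∈ (T : Set V) := by
    intro i
    fin_cases i <;> simp [hT]
  set f : Fin 4 → (T : Set V) := fun i => ⟨![u, a, b, v] i, hmem i⟩ with hf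
  have hinj : Function.Injective f := by
    intro i j h
    have h' : ![u, a, b, v] i = ![u, a, b, v] j := congrArg Subtype.val h
    fin_cases i <;> fin_cases j <;> simp_all [neua, neub, neuv, neab, neav, nebv]
  have hsurj : Function.Surjective f := by
    rintro ⟨x, hx⟩
    simp only [hT, Finset.coe_insert, Set.mem_insert_iff, Finset.coe_singleton,
      Set.mem_singleton_iff] at hx
    rcases hx with rfl | rfl | rfl | rfl
    · exact ⟨0, rfl⟩
    · exact ⟨1, rfl⟩
    · exact ⟨2, rfl⟩
    · exact ⟨3, rfl⟩
  refine ⟨(RelIso.mk (Equiv.ofBijective f ⟨hinj, hsurj⟩) ?_).symm⟩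
  intro i j
  show (S.induce (T : Set V)).Adj (f i) (f j) ↔ (pathGraph 4).Adj i j
  have hadj : (S.induce (T : Set V)).Adj (f i) (f j) ↔ S.Adj (![u,a,b,v] i) (![u,a,b,v] j) := by
    exact Iff.rfl
  rw [hadj]
  have hub' : ¬ S.Adj b u := fun h => hub h.symm
  have huv' : ¬ S.Adj v u := fun h => huv h.symm
  have hav' : ¬ S.Adj v a := fun h => hav h.symm
  fin_cases i <;> fin_cases j <;>
    simp [pathGraph_adj, hua, hab, hbv, hua.symm, hab.symm, hbv.symm, hub, huv, hav,
      hub', huv', hav'] <;> decide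

lemma p4_structure {V : Type*} [Fintype V] [DecidableEq V]
    (S : SimpleGraph V) [DecidableRel S.Adj] (K I : Finset V)
    (hpart : K ∪ I = Finset.univ) (hdisj : Disjoint K I)
    (hK : S.IsClique (K : Set V)) (hI : Sᶜ.IsClique (I : Set V))
    {u v : V} (hu : u ∈ I) (hv : v ∈ I) (huv : u ≠ v)
    {T : Finset V} (hcard : T.card = 4)
    (e : S.induce (T : Set V) ≃g pathGraph 4) (huT : u ∈ T) (hvT : v ∈ T) :
    ∃ a ∈ S.neighborFinset u \ S.neighborFinset v,
      ∃ b ∈ S.neighborFinset v \ S.neighborFinset u, T = {u, a, b, v} := by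
  have hIK : ∀ x y : V, x ∈ I → S.Adj x y → y ∈ K := by
    intro x y hx hxy
    have : y ∈ K ∪ I := hpart ▸ Finset.mem_univ y
    rcases Finset.mem_union.mp this with h | h
    · exact h
    · exact absurd hxy ((hI hx h hxy.ne).2).elim
  have hKadj : ∀ x y : V, x ∈ K → y ∈ K → x ≠ y → S.Adj x y := fun x y hx hy hxy => hK hx hy hxy
  have hnuv : ¬ S.Adj u v := (hI hu hv huv).2
  set w : Fin 4 → V := fun i => ↑(e.symm i) with hw
  have hw_adj : ∀ i j : Fin 4, S.Adj (w i) (w j) ↔ (pathGraph 4).Adj i j := by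
    intro i j
    rw [← e.symm.map_rel_iff]
    exact Iff.rfl
  have hw_inj : Function.Injective w := by
    intro i j h
    exact e.symm.injective (Subtype.ext h)
  have hwT : ∀ i : Fin 4, w i ∈ T := fun i => (e.symm i).2
  obtain ⟨iu, hiu⟩ : ∃ i, w i = u := ⟨e ⟨u, huT⟩, by simp [hw]⟩
  obtain ⟨iv, hiv⟩ : ∃ i, w i = v := ⟨e ⟨v, hvT⟩, by simp [hw]⟩
  have hne : iu ≠ iv := by rintro rfl; exact huv (hiu ▸ hiv)
  have hPuv : ¬ (pathGraph 4).Adj iu iv := by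
    rw [← hw_adj, hiu, hiv]; exact hnuv
  have hKw : ∀ i j : Fin 4, w i ∈ I → (pathGraph 4).Adj i j → w j ∈ K := by
    intro i j hi hij
    exact hIK _ _ hi ((hw_adj i j).mpr hij)
  have contra : ∀ i j : Fin 4, i ≠ j → w i ∈ K → w j ∈ K → (pathGraph 4).Adj i j :=
    fun i j hij hi hj => (hw_adj i j).mp (hKadj _ _ hi hj (fun h => hij (hw_inj h)))
  have hsetcard : ∀ i j k l : Fin 4, i ≠ j → i ≠ k → i ≠ l → j ≠ k → j ≠ l → k ≠ l →
      T = {w i, w j, w k, w l} := by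
    intro i j k l h1 h2 h3 h4 h5 h6
    have hne' : ∀ {x y : Fin 4}, x ≠ y → w x ≠ w y := fun h => fun hh => h (hw_inj hh)
    have hc : ({w i, w j, w k, w l} : Finset V).card = 4 := by
      rw [Finset.card_insert_of_notMem (by simp [hne' h1, hne' h2, hne' h3]),
          Finset.card_insert_of_notMem (by simp [hne' h4, hne' h5]),
          Finset.card_insert_of_notMem (by simp [hne' h6]), Finset.card_singleton]
    refine (Finset.eq_of_subset_of_card_le ?_ (by rw [hcard, hc])).symm
    intro x hx
    simp only [Finset.mem_insert, Finset.mem_singleton] at hx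
    rcases hx with rfl | rfl | rfl | rfl <;> exact hwT _
  have main : ∀ i j k l : Fin 4, w i = u → w l = v →
      (pathGraph 4).Adj i j → (pathGraph 4).Adj j k → (pathGraph 4).Adj k l →
      ¬ (pathGraph 4).Adj i k → ¬ (pathGraph 4).Adj j l →
      i ≠ j → i ≠ k → i ≠ l → j ≠ k → j ≠ l → k ≠ l →
      ∃ a ∈ S.neighborFinset u \ S.neighborFinset v,
        ∃ b ∈ S.neighborFinset v \ S.neighborFinset u, T = {u, a, b, v} := by
    intro i j k l hiu' hil' hij hjk hkl hik hjl n1 n2 n3 n4 n5 n6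
    refine ⟨w j, ?_, w k, ?_, ?_⟩
    · rw [Finset.mem_sdiff, mem_neighborFinset, mem_neighborFinset, ← hiu', ← hil']
      exact ⟨(hw_adj i j).mpr hij, fun h => hjl ((hw_adj l j).mp h).symm⟩
    · rw [Finset.mem_sdiff, mem_neighborFinset, mem_neighborFinset, ← hiu', ← hil']
      exact ⟨((hw_adj k l).mpr hkl).symm, fun h => hik ((hw_adj i k).mp h)⟩
    · rw [← hiu', ← hil']; exact hsetcard i j k l n1 n2 n3 n4 n5 n6
  have mid : ∀ i j k l : Fin 4, w i = u → w k = v →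
      (pathGraph 4).Adj i j → (pathGraph 4).Adj k l → ¬ (pathGraph 4).Adj j l → j ≠ l →
      False := by
    intro i j k l hiu' hik' hij hkl hjl hne'
    have h1 : w j ∈ K := hKw i j (hiu' ▸ hu) hij
    have h2 : w l ∈ K := hKw k l (hik' ▸ hv) hkl
    exact hjl (contra j l hne' h1 h2)
  have pa : ∀ {i j : Fin 4}, (i.val + 1 = j.val ∨ j.val + 1 = i.val) → (pathGraph 4).Adj i j :=
    fun h => pathGraph_adj.mpr h
  have pn : ∀ {i j : Fin 4}, ¬(i.val + 1 = j.val ∨ j.val + 1 = i.val) → ¬(pathGraph 4).Adj i j :=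
    fun h hh => h (pathGraph_adj.mp hh)
  fin_cases iu <;> fin_cases iv <;>
    first
      | exact absurd rfl hne
      | exact absurd (pa (by decide)) hPuv
      | exact (mid _ 1 _ 3 hiu hiv (pa (by decide)) (pa (by decide)) (pn (by decide)) (by decide)).elim
      | exact (mid _ 3 _ 1 hiu hiv (pa (by decide)) (pa (by decide)) (pn (by decide)) (by decide)).elim
      | exact (mid _ 0 _ 2 hiu hiv (pa (by decide)) (pa (by decide)) (pn (by decide)) (by decide)).elim
      | exact (mid _ 2 _ 0 hiu hiv (pa (by decide)) (pa (by decide)) (pn (by decide)) (by decide)).elim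
      | exact main _ 1 2 _ hiu hiv (pa (by decide)) (pa (by decide)) (pa (by decide)) (pn (by decide)) (pn (by decide))
          (by decide) (by decide) (by decide) (by decide) (by decide) (by decide)
      | exact main _ 2 1 _ hiu hiv (pa (by decide)) (pa (by decide)) (pa (by decide)) (pn (by decide)) (pn (by decide))
          (by decide) (by decide) (by decide) (by decide) (by decide) (by decide)

theorem stmt5 {V : Type*} [Fintype V] [DecidableEq V] [Nonempty V]
    (S : SimpleGraph V) [DecidableRel S.Adj] (K I : Finset V)
    (hpart : K ∪ I = Finset.univ) (hdisj : Disjoint K I)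
    (hK : S.IsClique (K : Set V)) (hI : Sᶜ.IsClique (I : Set V))
    (u v : V) (hu : u ∈ I) (hv : v ∈ I) (huv : u ≠ v)
    (hdeg : S.degree v ≤ S.degree u)
    (p : ℕ) (hp : p.Prime) (hs : sigmaP4 S u v = p) :
    (S.neighborFinset u \ S.neighborFinset v).card = p ∧
      (S.neighborFinset v \ S.neighborFinset u).card = 1 ∧
      S.degree u - S.degree v = p - 1 := by
  classical
  have hIK : ∀ x y : V, x ∈ I → S.Adj x y → y ∈ K := by
    intro x y hx hxy
    have : y ∈ K ∪ I := hpart ▸ Finset.mem_univ y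
    rcases Finset.mem_union.mp this with h | h
    · exact h
    · exact absurd hxy ((hI hx h hxy.ne).2).elim
  have hnuv : ¬ S.Adj u v := (hI hu hv huv).2
  set A := S.neighborFinset u \ S.neighborFinset v with hA
  set B := S.neighborFinset v \ S.neighborFinset u with hB
  have key : ∀ T : Finset V, (IsInducedP4 S T ∧ u ∈ T ∧ v ∈ T) ↔
      ∃ a ∈ A, ∃ b ∈ B, T = {u, a, b, v} := by
    intro T
    constructor
    · rintro ⟨⟨hc, ⟨e⟩⟩, huT, hvT⟩
      exact p4_structure S K I hpart hdisj hK hI hu hv huv hc e huT hvT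
    · rintro ⟨a, ha, b, hb, rfl⟩
      rw [hA, Finset.mem_sdiff, mem_neighborFinset, mem_neighborFinset] at ha
      rw [hB, Finset.mem_sdiff, mem_neighborFinset, mem_neighborFinset] at hb
      obtain ⟨hua, hnva⟩ := ha
      obtain ⟨hvb, hnub⟩ := hb
      have haK : a ∈ K := hIK u a hu hua
      have hbK : b ∈ K := hIK v b hv hvb
      have hab : S.Adj a b := hK haK hbK (fun h => hnva (h ▸ hvb))
      have neub : u ≠ b := fun h => Finset.disjoint_left.mp hdisj (h ▸ hbK) hu
      have neav : a ≠ v := fun h => Finset.disjoint_left.mp hdisj haK (h ▸ hv)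
      refine ⟨isInducedP4_mk' S hua hab hvb.symm hnub hnuv (fun h => hnva h.symm) neub huv neav,
        ?_, ?_⟩ <;> simp
  -- counting
  set F : Finset (Finset V) :=
    (A ×ˢ B).image (fun ab : V × V => ({u, ab.1, ab.2, v} : Finset V)) with hF
  have memF : ∀ T : Finset V, (IsInducedP4 S T ∧ u ∈ T ∧ v ∈ T) ↔ T ∈ F := by
    intro T
    rw [key T, hF, Finset.mem_image]
    constructor
    · rintro ⟨a, ha, b, hb, rfl⟩
      exact ⟨(a, b), Finset.mem_product.mpr ⟨ha, hb⟩, rfl⟩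
    · rintro ⟨⟨a, b⟩, hab, rfl⟩
      exact ⟨a, (Finset.mem_product.mp hab).1, b, (Finset.mem_product.mp hab).2, rfl⟩
  have hinjOn : Set.InjOn (fun ab : V × V => ({u, ab.1, ab.2, v} : Finset V))
      ((A ×ˢ B : Finset (V × V)) : Set (V × V)) := by
    rintro ⟨a, b⟩ hab ⟨a', b'⟩ hab' h
    simp only [Finset.coe_product, Set.mem_prod, Finset.mem_coe] at hab hab'
    obtain ⟨ha, hb⟩ := hab
    obtain ⟨ha', hb'⟩ := hab'
    rw [hA, Finset.mem_sdiff, mem_neighborFinset, mem_neighborFinset] at ha ha'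
    rw [hB, Finset.mem_sdiff, mem_neighborFinset, mem_neighborFinset] at hb hb'
    simp only at h
    have hamem : a ∈ ({u, a', b', v} : Finset V) := by
      rw [← h]; simp
    have hbmem : b ∈ ({u, a', b', v} : Finset V) := by
      rw [← h]; simp
    simp only [Finset.mem_insert, Finset.mem_singleton] at hamem hbmem
    have haa : a = a' := by
      rcases hamem with h1 | h1 | h1 | h1
      · subst h1; exact absurd ha.1 (S.loopless.irrefl _)
      · exact h1
      · subst h1; exact absurd hb'.1 ha.2
      · subst h1; exact absurd ha.1 hnuv
    have hbb : b = b' := by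
      rcases hbmem with h1 | h1 | h1 | h1
      · subst h1; exact absurd hb.1.symm hnuv
      · subst h1; exact absurd hb.1 ha'.2
      · exact h1
      · subst h1; exact absurd hb.1 (S.loopless.irrefl _)
    exact Prod.ext haa hbb
  have hcount : sigmaP4 S u v = A.card * B.card := by
    rw [sigmaP4, Nat.card_congr (Equiv.subtypeEquivRight memF)]
    rw [Nat.card_eq_fintype_card, Fintype.card_coe, hF,
      Finset.card_image_of_injOn hinjOn, Finset.card_product]
  have hprod : A.card * B.card = p := by rw [← hcount, hs]
  have hdegu : S.degree u = A.card + (S.neighborFinset u ∩ S.neighborFinset v).card :=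
    (Finset.card_sdiff_add_card_inter _ _).symm
  have hdegv : S.degree v = B.card + (S.neighborFinset u ∩ S.neighborFinset v).card := by
    rw [Finset.inter_comm]
    exact (Finset.card_sdiff_add_card_inter _ _).symm
  have hBA : B.card ≤ A.card := by omega
  have hdvd : B.card ∣ p := ⟨A.card, by rw [← hprod, mul_comm]⟩
  rcases hp.eq_one_or_self_of_dvd _ hdvd with h1 | h1
  · have hAp : A.card = p := by rw [h1, mul_one] at hprod; exact hprod
    refine ⟨hAp, h1, ?_⟩
    have := hp.two_le
    omega
  · exfalso
    rw [h1] at hprod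
    have hA1 : A.card = 1 := by
      have := Nat.eq_of_mul_eq_mul_right hp.pos (hprod.trans (one_mul p).symm)
      exact this
    have := hp.two_le
    omega
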